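/- Let H be a symmetric positive definite n×n real matrix, let θ_r, g, v ∈ ℝⁿ, let c, c' ∈ ℝ, and let ρ > 0. Define L_r(θ) = ½·(θ − θ_r)ᵀ H (θ − θ_r), L_f(θ) = gᵀθ + c, and ℓ(θ) = vᵀθ + c'. If θ* ∈ ℝⁿ satisfies ∇(L_r + ρ·L_f)(θ*) = 0, then ℓ(θ_r) − ℓ(θ*) = ρ·vᵀH⁻¹g. -/

import Mathlib

open scoped RealInnerProductSpace

/-- Exact form of Theorem 1 (interference in multi-task unlearning): with
`L_r(θ) = ½ (θ-θ_r)ᵀ H (θ-θ_r)` (`H` symmetric positive definite),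
`L_f(θ) = gᵀθ + c`, `ℓ(θ) = vᵀθ + c'`, and `θ*` a critical point of `L_r + ρ·L_f`,
the induced loss change is `ℓ(θ_r) − ℓ(θ*) = ρ·vᵀH⁻¹g`. -/
theorem loss_change_first_order {n : ℕ}
    (H : Matrix (Fin n) (Fin n) ℝ) (hsymm : H.IsSymm) (hpd : H.PosDef)
    (θr g v : EuclideanSpace ℝ (Fin n)) (c c' ρ : ℝ) (hρ : 0 < ρ)
    (Lr Lf ℓ : EuclideanSpace ℝ (Fin n) → ℝ)
    (hLr : Lr = fun θ => (1 / 2) * ⟪θ - θr, Matrix.toEuclideanLin H (θ - θr)⟫)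
    (hLf : Lf = fun θ => ⟪g, θ⟫ + c)
    (hℓ : ℓ = fun θ => ⟪v, θ⟫ + c')
    (θs : EuclideanSpace ℝ (Fin n))
    (hcrit : gradient (fun θ => Lr θ + ρ * Lf θ) θs = 0) :
    ℓ θr - ℓ θs = ρ * ⟪v, Matrix.toEuclideanLin H⁻¹ g⟫ := by
  set A : EuclideanSpace ℝ (Fin n) →L[ℝ] EuclideanSpace ℝ (Fin n) :=
    LinearMap.toContinuousLinearMap (Matrix.toEuclideanLin H) with hA
  have hAapp : ∀ x, A x = Matrix.toEuclideanLin H x := fun x => rfl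
  have hsym : ∀ x y : EuclideanSpace ℝ (Fin n), ⟪x, A y⟫ = ⟪A x, y⟫ := by
    intro x y
    have := (Matrix.isHermitian_iff_isSymmetric.mp hsymm) x y
    simpa [hAapp, real_inner_comm] using this.symm
  have h1 : HasFDerivAt (fun θ : EuclideanSpace ℝ (Fin n) => θ - θr)
      (ContinuousLinearMap.id ℝ _) θs := (hasFDerivAt_id θs).sub_const θr
  have h2 : HasFDerivAt (fun θ : EuclideanSpace ℝ (Fin n) => A (θ - θr)) A θs := by
    have h := A.hasFDerivAt.comp θs h1
    rw [ContinuousLinearMap.comp_id] at h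
    exact h
  have hq := (h1.inner ℝ h2)
  have hLf' : HasFDerivAt (fun θ : EuclideanSpace ℝ (Fin n) => ρ * (⟪g, θ⟫ + c))
      (ρ • (InnerProductSpace.toDual ℝ _ g : EuclideanSpace ℝ (Fin n) →L[ℝ] ℝ)) θs := by
    have : HasFDerivAt (fun θ : EuclideanSpace ℝ (Fin n) => ⟪g, θ⟫ + c)
        (InnerProductSpace.toDual ℝ _ g : EuclideanSpace ℝ (Fin n) →L[ℝ] ℝ) θs := by
      simpa using ((InnerProductSpace.toDual ℝ (EuclideanSpace ℝ (Fin n)) g).hasFDerivAt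
        (x := θs)).add_const c
    simpa using this.const_mul ρ
  have hf : HasFDerivAt (fun θ => Lr θ + ρ * Lf θ)
      ((InnerProductSpace.toDual ℝ _) (A (θs - θr) + ρ • g)) θs := by
    rw [hLr, hLf]
    have h5 := ((hq.const_mul ((1:ℝ)/2)).add hLf')
    refine h5.congr_fderiv ?_
    ext x
    simp only [ContinuousLinearMap.add_apply, ContinuousLinearMap.coe_smul',
      Pi.smul_apply, ContinuousLinearMap.comp_apply, ContinuousLinearMap.prod_apply,
      ContinuousLinearMap.id_apply, fderivInnerCLM_apply, InnerProductSpace.toDual_apply_apply,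
      inner_add_left, real_inner_smul_left, smul_eq_mul]
    rw [hsym (θs - θr) x, real_inner_comm x (A (θs - θr))]
    ring
  have hgrad : HasGradientAt (fun θ => Lr θ + ρ * Lf θ) (A (θs - θr) + ρ • g) θs :=
    (hasGradientAt_iff_hasFDerivAt).mpr hf
  have hzero : A (θs - θr) + ρ • g = 0 := by rw [← hgrad.gradient]; exact hcrit
  have h3 : Matrix.toEuclideanLin H (θs - θr) = -(ρ • g) := by
    rw [← hAapp]; exact eq_neg_of_add_eq_zero_left hzero
  have hid : ∀ x : EuclideanSpace ℝ (Fin n),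
      Matrix.toEuclideanLin H⁻¹ (Matrix.toEuclideanLin H x) = x := by
    intro x
    rw [Matrix.toEuclideanLin_apply, Matrix.toEuclideanLin_apply]
    simp only [Equiv.apply_symm_apply, Matrix.mulVec_mulVec,
      Matrix.nonsing_inv_mul H (isUnit_iff_ne_zero.mpr hpd.det_pos.ne'),
      Matrix.one_mulVec, Equiv.symm_apply_apply]
  have hinv : θr - θs = ρ • Matrix.toEuclideanLin H⁻¹ g := by
    have h4 := congrArg (Matrix.toEuclideanLin H⁻¹) h3
    rw [hid, map_neg, map_smul] at h4
    have : θr - θs = -(θs - θr) := by abel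
    rw [this, h4, neg_neg]
  have hstep : ℓ θr - ℓ θs = ⟪v, θr - θs⟫ := by
    rw [hℓ]; simp only [inner_sub_right]; ring
  rw [hstep, hinv, real_inner_smul_right]
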